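/- arXiv:math/0611887 — 4 statements merged into one kernel-verified Lean document; each statement's English description precedes it below -/
import Mathlib

section
/- If f : M → M' is a map between modules over Z[s^{±1}, t^{±1}] satisfying f(0) = 0 and f(t·x + (1−st)·y) = t·f(x) + (1−st)·f(y) for all x, y ∈ M, then for any element y ∈ M that lies in both t·M and (1−st)·M, one has f(−y) = −f(y). -/
noncomputable section

/-- The Laurent polynomial ring `ℤ[s^{±1}, t^{±1}]` in two variables,
realized as the group algebra of `ℤ × ℤ` over `ℤ`. -/
abbrev L : Type := AddMonoidAlgebra ℤ (ℤ × ℤ)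

/-- The variable `s`. -/
def sL : L := AddMonoidAlgebra.single (1, 0) 1
/-- The variable `t`. -/
def tL : L := AddMonoidAlgebra.single (0, 1) 1
/-- The inverse `s⁻¹`. -/
def sLi : L := AddMonoidAlgebra.single (-1, 0) 1
/-- The inverse `t⁻¹`. -/
def tLi : L := AddMonoidAlgebra.single (0, -1) 1

/-- `s` as a unit of `L`. -/
def sU : Lˣ where
  val := sL
  inv := sLi
  val_inv := by
    simp [sL, sLi, AddMonoidAlgebra.single_mul_single, AddMonoidAlgebra.one_def, Prod.ext_iff] <;> rfl
  inv_val := by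
    simp [sL, sLi, AddMonoidAlgebra.single_mul_single, AddMonoidAlgebra.one_def, Prod.ext_iff] <;> rfl

/-- The submodule `(1-st)M`. -/
def Dsub (M : Type) [AddCommGroup M] [Module L M] : Submodule L M :=
  LinearMap.range (LinearMap.lsmul L M (1 - sL * tL))

/-- The `s`-orbit `O_s(X)` of a subset `X ⊆ M`. -/
def Os {M : Type} [AddCommGroup M] [Module L M] (X : Set M) : Set M :=
  { y | ∃ (n : ℤ) (x : M), x ∈ X ∧ y = ((sU ^ n : Lˣ) : L) • x }

/-- `A` is a set of coset representatives for `M/(1-st)M`. -/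
def IsCR (M : Type) [AddCommGroup M] [Module L M] (A : Set M) : Prop :=
  ∀ x : M, ∃! a, a ∈ A ∧ x - a ∈ Dsub M

/-- `f` preserves the four Alexander biquandle operations. -/
def IsBqHom {M M' : Type} [AddCommGroup M] [Module L M] [AddCommGroup M'] [Module L M']
    (f : M → M') : Prop :=
  (∀ x y : M, f (tL • x + (1 - sL * tL) • y) = tL • f x + (1 - sL * tL) • f y) ∧
  (∀ x : M, f (sL • x) = sL • f x) ∧
  (∀ x y : M, f (tLi • x + (1 - sLi * tLi) • y) = tLi • f x + (1 - sLi * tLi) • f y) ∧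
  (∀ x : M, f (sLi • x) = sLi • f x)

theorem stmt_2 {M M' : Type} [AddCommGroup M] [Module L M] [AddCommGroup M'] [Module L M']
    (f : M → M') (h0 : f 0 = 0)
    (h1 : ∀ x y : M, f (tL • x + (1 - sL * tL) • y) = tL • f x + (1 - sL * tL) • f y) :
    ∀ y : M, (∃ w : M, y = tL • w) → (∃ z : M, y = (1 - sL * tL) • z) →
      f (-y) = -f y := by
  rintro y ⟨w, rfl⟩ ⟨z, hz⟩
  have key := h1 w (-z)
  rw [smul_neg, ← hz, add_neg_cancel, h0] at key
  have hy : f (tL • w) = tL • f w := by simpa [h0] using h1 w 0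
  have hny : f (-(tL • w)) = (1 - sL * tL) • f (-z) := by
    have h2 := h1 0 (-z)
    rw [smul_zero, zero_add, h0, smul_zero, zero_add] at h2
    rw [← h2, smul_neg, ← hz]
  rw [hny, hy]
  exact eq_neg_of_add_eq_zero_right key.symm
end
end

section
/- Let f : M → M' be an isomorphism of Alexander biquandles with f(0) = 0. Then the restriction h = f|_{(1−st)M} : (1−st)M → (1−st)M' is an isomorphism of Z[s^{±1}, t^{±1}]-modules; in particular h is additive, commutes with multiplication by s and t, and is a bijection between (1−st)M and (1−st)M'. -/
noncomputable section

lemma tmul : tL * tLi = (1 : L) := by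
  simp [tL, tLi, AddMonoidAlgebra.single_mul_single, AddMonoidAlgebra.one_def, Prod.ext_iff] <;> rfl

lemma mem_Dsub_iff {M : Type} [AddCommGroup M] [Module L M] (x : M) :
    x ∈ Dsub M ↔ ∃ y, (1 - sL * tL) • y = x := by
  simp only [Dsub, LinearMap.mem_range, LinearMap.lsmul_apply]

theorem stmt_6 {M M' : Type} [AddCommGroup M] [Module L M] [AddCommGroup M'] [Module L M']
    (f : M → M') (hbij : Function.Bijective f) (hhom : IsBqHom f) (h0 : f 0 = 0) :
    Set.BijOn f (Dsub M : Set M) (Dsub M' : Set M') ∧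
    (∀ x ∈ Dsub M, ∀ y ∈ Dsub M, f (x + y) = f x + f y) ∧
    (∀ x ∈ Dsub M, f (sL • x) = sL • f x) ∧
    (∀ x ∈ Dsub M, f (tL • x) = tL • f x) := by
  obtain ⟨h1, h2, h3, h4⟩ := hhom
  have ft : ∀ x : M, f (tL • x) = tL • f x := fun x => by
    simpa [h0] using h1 x 0
  have fti : ∀ x : M, f (tLi • x) = tLi • f x := fun x => by
    simpa [h0] using h3 x 0
  have fa : ∀ y : M, f ((1 - sL * tL) • y) = (1 - sL * tL) • f y := fun y => by
    simpa [h0] using h1 0 y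
  have fadd : ∀ (x y : M), f (x + (1 - sL * tL) • y) = f x + (1 - sL * tL) • f y := by
    intro x y
    have := h1 (tLi • x) y
    rw [smul_smul, tmul, one_smul, fti, smul_smul, tmul, one_smul] at this
    exact this
  refine ⟨⟨?_, hbij.1.injOn, ?_⟩, ?_, ?_, ?_⟩
  · intro x hx
    obtain ⟨y, hy⟩ := (mem_Dsub_iff x).1 hx
    exact (mem_Dsub_iff (f x)).2 ⟨f y, by rw [← hy, fa]⟩
  · intro x' hx'
    obtain ⟨y', hy'⟩ := (mem_Dsub_iff x').1 hx'
    obtain ⟨y, rfl⟩ := hbij.2 y'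
    exact ⟨(1 - sL * tL) • y, (mem_Dsub_iff _).2 ⟨y, rfl⟩, by rw [fa, hy']⟩
  · intro x _ y hy
    obtain ⟨y0, rfl⟩ := (mem_Dsub_iff y).1 hy
    rw [fadd, fa]
  · intro x _
    exact h2 x
  · intro x _
    exact ft x
end
end

section
/- Let f : M → M' be an isomorphism of Alexander biquandles with f(0) = 0, h = f restricted to (1−st)M, and A a set of coset representatives of M/(1−st)M with 0 ∈ A. Then for every x ∈ M, writing x = α + ω with α ∈ A and ω ∈ (1−st)M uniquely, one has f(x) = f(α) + h(ω). -/
noncomputable section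

theorem stmt_10 {M M' : Type} [AddCommGroup M] [Module L M] [AddCommGroup M'] [Module L M']
    (f : M → M') (hbij : Function.Bijective f) (hhom : IsBqHom f) (h0 : f 0 = 0)
    (A : Set M) (hA : IsCR M A) (h0A : (0 : M) ∈ A) :
    ∀ α ∈ A, ∀ ω ∈ Dsub M, f (α + ω) = f α + f ω := by
  intro α hα ω hω
  obtain ⟨y, hy⟩ := hω
  simp only [LinearMap.lsmul_apply] at hy
  have htt : tL * tLi = 1 := by
    simp [tL, tLi, AddMonoidAlgebra.single_mul_single, AddMonoidAlgebra.one_def, Prod.ext_iff] <;> rfl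
  have key : ∀ z : M, tL • (tLi • z) = z := fun z => by
    rw [smul_smul, htt, one_smul]
  have h1 := hhom.1
  have e1 := h1 (tLi • α) y
  rw [key, hy] at e1
  have e2 := h1 (tLi • α) 0
  rw [key, smul_zero, add_zero, h0, smul_zero, add_zero] at e2
  have e3 := h1 0 y
  rw [smul_zero, zero_add, hy, h0, smul_zero, zero_add] at e3
  rw [e1, ← e2, ← e3]
end
end

section
/- Under the hypotheses of the reverse direction of the main theorem (existence of module isomorphism h : (1−st)M → (1−st)M', coset representatives A, A' with 0 ∈ A, and a compatible bijection g : O_s(A) → O_s(A')), the map f : M → M' defined by f(α + ω) = g(α) + h(ω) satisfies f(s·x) = s·f(x) for all x ∈ M. -/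
noncomputable section

theorem stmt_13
    {M M' : Type} [AddCommGroup M] [Module L M] [AddCommGroup M'] [Module L M']
    (h : Dsub M ≃ₗ[L] Dsub M')
    (A : Set M) (hA : IsCR M A) (h0A : (0 : M) ∈ A)
    (A' : Set M') (hA' : IsCR M' A')
    (g : M → M') (hg : Set.BijOn g (Os A) (Os A')) (hgA : g '' A = A')
    (hg1 : ∀ α ∈ A, (1 - sL * tL) • g α = (h ⟨(1 - sL * tL) • α, ⟨α, rfl⟩⟩ : M'))
    (hg2 : ∀ α ∈ A, ∀ ω (hω : ω ∈ Dsub M), sL • α + ω ∈ Os A →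
      g (sL • α + ω) = sL • g α + (h ⟨ω, hω⟩ : M'))
    (f : M → M')
    (hf : ∀ α ∈ A, ∀ ω (hω : ω ∈ Dsub M), f (α + ω) = g α + (h ⟨ω, hω⟩ : M')) :
    ∀ x : M, f (sL • x) = sL • f x := by
  intro x
  obtain ⟨α, ⟨hαA, hαD⟩, -⟩ := hA x
  obtain ⟨β, ⟨hβA, hβD⟩, -⟩ := hA (sL • x)
  have hmem : β - sL • α ∈ Dsub M := by
    have h1 : sL • (x - α) ∈ Dsub M := Submodule.smul_mem _ _ hαD
    have h2 := sub_mem h1 hβD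
    have : sL • (x - α) - (sL • x - β) = β - sL • α := by
      rw [smul_sub]; abel
    rwa [this] at h2
  set ω₁ : Dsub M := ⟨x - α, hαD⟩
  set ω₂ : Dsub M := ⟨sL • x - β, hβD⟩
  set ω₃ : Dsub M := ⟨β - sL • α, hmem⟩
  have hβOs : sL • α + (β - sL • α) ∈ Os A := by
    rw [add_sub_cancel]
    exact ⟨0, β, hβA, by simp⟩
  have hgβ : g β = sL • g α + (h ω₃ : M') := by
    have := hg2 α hαA (β - sL • α) hmem hβOs
    rwa [add_sub_cancel] at this
  have hfx : f x = g α + (h ω₁ : M') := by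
    have := hf α hαA (x - α) hαD
    rwa [add_sub_cancel] at this
  have hfsx : f (sL • x) = g β + (h ω₂ : M') := by
    have := hf β hβA (sL • x - β) hβD
    rwa [add_sub_cancel] at this
  have hsum : ω₃ + ω₂ = sL • ω₁ := by
    ext
    show (β - sL • α) + (sL • x - β) = sL • (x - α)
    rw [smul_sub]; abel
  have hkey : (h ω₃ : M') + (h ω₂ : M') = sL • (h ω₁ : M') := by
    have := congrArg (fun z => ((h z : Dsub M') : M')) hsum
    simpa [map_add, map_smul] using this
  rw [hfsx, hgβ, hfx, smul_add, add_assoc, hkey]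
end
end
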